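/- Fix n ≥ 1 and consider the 4-row voting profile (v₁, v₂, v₃, v₄) on [2^{n+3}] defined from the blocks A₁, B₁, A₂, B₂. Then: (a) for any two distinct candidates i, j lying both in [2^{n+2}] or both in [2^{n+3}]\[2^{n+2}], exactly two of the four rows rank i before j (so the pair is tied); (b) for i ∈ [2^{n+2}] and j ∈ [2^{n+3}]\[2^{n+2}], at least three of the four rows rank i before j if i+j is even, and at least three of the four rows rank j before i if i+j is odd. Hence this 4-row profile generates exactly the cross arrows of η_n between [2^{n+2}] and its complement, and no arrows within each half. -/

import Mathlib

/-- Number of rows (preference lists) of the voting profile `R` ranking `i` before `j`. -/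
def prefCount (R : List (List ℕ)) (i j : ℕ) : ℕ :=
  (R.filter fun ρ => decide (ρ.idxOf i < ρ.idxOf j)).length

/-- `R` is a voting profile on the candidate set `{1,…,m}` generating the tournament `η`:
every row is a permutation of `{1,…,m}` and, for distinct candidates `i,j`, `i ▷ j`
holds iff strictly more rows rank `i` before `j` than rank `j` before `i`. -/
def Generates (R : List (List ℕ)) (m : ℕ) (η : ℕ → ℕ → Bool) : Prop :=
  (∀ ρ ∈ R, ρ.Perm (List.range' 1 m)) ∧
  ∀ i ∈ List.range' 1 m, ∀ j ∈ List.range' 1 m, i ≠ j →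
    (η i j = true ↔ prefCount R j i < prefCount R i j)

/-- The increasing list of the odd elements of `{1,…,2^(n+2)}`. -/
def Aodd (n : ℕ) : List ℕ := (List.range (2^(n+1))).map fun t => 2*t+1

/-- The increasing list of the even elements of `{1,…,2^(n+2)}`. -/
def Aeven (n : ℕ) : List ℕ := (List.range (2^(n+1))).map fun t => 2*t+2

/-- The increasing list of the odd elements of `{2^(n+2)+1,…,2^(n+3)}`. -/
def Bodd (n : ℕ) : List ℕ := (Aodd n).map (· + 2^(n+2))

/-- The increasing list of the even elements of `{2^(n+2)+1,…,2^(n+3)}`. -/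
def Beven (n : ℕ) : List ℕ := (Aeven n).map (· + 2^(n+2))

/-- The preference list `v₁ = (A₁, B₁, A₂, B₂)` on `{1,…,2^(n+3)}`. -/
def v1 (n : ℕ) : List ℕ := Aodd n ++ Bodd n ++ Aeven n ++ Beven n

/-- The preference list `v₂ = (Ā₂, B̄₂, Ā₁, B̄₁)` on `{1,…,2^(n+3)}`. -/
def v2 (n : ℕ) : List ℕ :=
  (Aeven n).reverse ++ (Beven n).reverse ++ (Aodd n).reverse ++ (Bodd n).reverse

/-- The preference list `v₃ = (B₁, A₂, B₂, A₁)` on `{1,…,2^(n+3)}`. -/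
def v3 (n : ℕ) : List ℕ := Bodd n ++ Aeven n ++ Beven n ++ Aodd n

/-- The preference list `v₄ = (B̄₂, Ā₁, B̄₁, Ā₂)` on `{1,…,2^(n+3)}`. -/
def v4 (n : ℕ) : List ℕ :=
  (Beven n).reverse ++ (Aodd n).reverse ++ (Bodd n).reverse ++ (Aeven n).reverse

/-! ### Auxiliary machinery -/

lemma idx_map_range {f : ℕ → ℕ} {M k : ℕ} (hk : k < M)
    (hf : ∀ a, a < M → ∀ b, b < M → f a = f b → a = b) :
    ((List.range M).map f).idxOf (f k) = k := by
  have hnd : ((List.range M).map f).Nodup :=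
    List.Nodup.map_on
      (fun a ha b hb h => hf a (List.mem_range.1 ha) b (List.mem_range.1 hb) h)
      List.nodup_range
  have hlen : k < ((List.range M).map f).length := by simpa using hk
  have hget : ((List.range M).map f)[k]'hlen = f k := by simp
  conv_lhs => rw [← hget]
  exact List.Nodup.idxOf_getElem hnd k hlen

lemma idx_map_range_rev {f : ℕ → ℕ} {M k : ℕ} (hk : k < M)
    (hf : ∀ a, a < M → ∀ b, b < M → f a = f b → a = b) :
    ((List.range M).map f).reverse.idxOf (f k) = M - 1 - k := by
  have hnd : ((List.range M).map f).Nodup :=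
    List.Nodup.map_on
      (fun a ha b hb h => hf a (List.mem_range.1 ha) b (List.mem_range.1 hb) h)
      List.nodup_range
  have hlen : M - 1 - k < ((List.range M).map f).reverse.length := by simp; omega
  have hget : ((List.range M).map f).reverse[M - 1 - k]'hlen = f k := by
    rw [List.getElem_reverse]
    have h1 : ((List.range M).map f).length - 1 - (M - 1 - k) = k := by simp; omega
    simp only [h1]
    simp [hk]
  conv_lhs => rw [← hget]
  have := List.Nodup.idxOf_getElem (by simpa using hnd) (M - 1 - k) hlen
  rw [this]

lemma Bodd_eq (n : ℕ) : Bodd n = (List.range (2^(n+1))).map fun t => 2*t+1+2^(n+2) := by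
  simp only [Bodd, Aodd, List.map_map]; rfl

lemma Beven_eq (n : ℕ) : Beven n = (List.range (2^(n+1))).map fun t => 2*t+2+2^(n+2) := by
  simp only [Beven, Aeven, List.map_map]; rfl

lemma mem_Aodd {n x : ℕ} : x ∈ Aodd n ↔ x % 2 = 1 ∧ x < 2^(n+2) := by
  have h2 : (2:ℕ)^(n+2) = 2*2^(n+1) := by ring
  simp only [Aodd, List.mem_map, List.mem_range]
  constructor
  · rintro ⟨t, ht, rfl⟩; omega
  · intro h; exact ⟨x/2, by omega, by omega⟩

lemma mem_Aeven {n x : ℕ} : x ∈ Aeven n ↔ x % 2 = 0 ∧ 0 < x ∧ x ≤ 2^(n+2) := by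
  have h2 : (2:ℕ)^(n+2) = 2*2^(n+1) := by ring
  simp only [Aeven, List.mem_map, List.mem_range]
  constructor
  · rintro ⟨t, ht, rfl⟩; omega
  · intro h; exact ⟨x/2 - 1, by omega, by omega⟩

lemma mem_Bodd {n x : ℕ} : x ∈ Bodd n ↔ x % 2 = 1 ∧ 2^(n+2) < x ∧ x < 2^(n+3) := by
  have h2 : (2:ℕ)^(n+2) = 2*2^(n+1) := by ring
  have h3 : (2:ℕ)^(n+3) = 4*2^(n+1) := by ring
  rw [Bodd_eq]
  simp only [List.mem_map, List.mem_range]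
  constructor
  · rintro ⟨t, ht, rfl⟩; omega
  · intro h; exact ⟨(x - 2^(n+2))/2, by omega, by omega⟩

lemma mem_Beven {n x : ℕ} : x ∈ Beven n ↔ x % 2 = 0 ∧ 2^(n+2) < x ∧ x ≤ 2^(n+3) := by
  have h2 : (2:ℕ)^(n+2) = 2*2^(n+1) := by ring
  have h3 : (2:ℕ)^(n+3) = 4*2^(n+1) := by ring
  rw [Beven_eq]
  simp only [List.mem_map, List.mem_range]
  constructor
  · rintro ⟨t, ht, rfl⟩; omega
  · intro h; exact ⟨(x - 2^(n+2))/2 - 1, by omega, by omega⟩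

lemma lenAodd (n : ℕ) : (Aodd n).length = 2^(n+1) := by simp [Aodd]
lemma lenAeven (n : ℕ) : (Aeven n).length = 2^(n+1) := by simp [Aeven]
lemma lenBodd (n : ℕ) : (Bodd n).length = 2^(n+1) := by simp [Bodd, Aodd]
lemma lenBeven (n : ℕ) : (Beven n).length = 2^(n+1) := by simp [Beven, Aeven]

/-! Block index lemmas -/

lemma iAodd (n s : ℕ) (hs : s < 2^(n+1)) : (Aodd n).idxOf (2*s+1) = s := by
  apply idx_map_range hs; intro a ha b hb h; omega

lemma iAeven (n s : ℕ) (hs : s < 2^(n+1)) : (Aeven n).idxOf (2*s+2) = s := by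
  apply idx_map_range hs; intro a ha b hb h; omega

lemma iBodd (n s : ℕ) (hs : s < 2^(n+1)) : (Bodd n).idxOf (2*s+1+2^(n+2)) = s := by
  rw [Bodd_eq]; apply idx_map_range hs; intro a ha b hb h; omega

lemma iBeven (n s : ℕ) (hs : s < 2^(n+1)) : (Beven n).idxOf (2*s+2+2^(n+2)) = s := by
  rw [Beven_eq]; apply idx_map_range hs; intro a ha b hb h; omega

lemma iAoddR (n s : ℕ) (hs : s < 2^(n+1)) :
    (Aodd n).reverse.idxOf (2*s+1) = 2^(n+1) - 1 - s := by
  apply idx_map_range_rev hs; intro a ha b hb h; omega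

lemma iAevenR (n s : ℕ) (hs : s < 2^(n+1)) :
    (Aeven n).reverse.idxOf (2*s+2) = 2^(n+1) - 1 - s := by
  apply idx_map_range_rev hs; intro a ha b hb h; omega

lemma iBoddR (n s : ℕ) (hs : s < 2^(n+1)) :
    (Bodd n).reverse.idxOf (2*s+1+2^(n+2)) = 2^(n+1) - 1 - s := by
  rw [Bodd_eq]; apply idx_map_range_rev hs; intro a ha b hb h; omega

lemma iBevenR (n s : ℕ) (hs : s < 2^(n+1)) :
    (Beven n).reverse.idxOf (2*s+2+2^(n+2)) = 2^(n+1) - 1 - s := by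
  rw [Beven_eq]; apply idx_map_range_rev hs; intro a ha b hb h; omega

/-! Four-block append index lemmas -/

section
variable {l1 l2 l3 l4 : List ℕ} {a : ℕ}

lemma idxApp1 (h1 : a ∈ l1) : (l1 ++ l2 ++ l3 ++ l4).idxOf a = l1.idxOf a := by
  rw [List.append_assoc, List.append_assoc, List.idxOf_append_of_mem h1]

lemma idxApp2 (h1 : a ∉ l1) (h2 : a ∈ l2) :
    (l1 ++ l2 ++ l3 ++ l4).idxOf a = l1.length + l2.idxOf a := by
  rw [List.append_assoc, List.append_assoc, List.idxOf_append_of_notMem h1,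
    List.idxOf_append_of_mem h2]

lemma idxApp3 (h1 : a ∉ l1) (h2 : a ∉ l2) (h3 : a ∈ l3) :
    (l1 ++ l2 ++ l3 ++ l4).idxOf a = l1.length + (l2.length + l3.idxOf a) := by
  rw [List.append_assoc, List.append_assoc, List.idxOf_append_of_notMem h1,
    List.idxOf_append_of_notMem h2, List.idxOf_append_of_mem h3]

lemma idxApp4 (h1 : a ∉ l1) (h2 : a ∉ l2) (h3 : a ∉ l3) :
    (l1 ++ l2 ++ l3 ++ l4).idxOf a
      = l1.length + (l2.length + (l3.length + l4.idxOf a)) := by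
  rw [List.append_assoc, List.append_assoc, List.idxOf_append_of_notMem h1,
    List.idxOf_append_of_notMem h2, List.idxOf_append_of_notMem h3]

end

/-! Index of each kind of element in each row -/

section
variable (n s : ℕ)

lemma i1OL (hs : s < 2^(n+1)) : (v1 n).idxOf (2*s+1) = s := by
  have h2 : (2:ℕ)^(n+2) = 2*2^(n+1) := by ring
  rw [v1, idxApp1 (mem_Aodd.2 (by omega))]; exact iAodd n s hs

lemma i1OU (hs : s < 2^(n+1)) : (v1 n).idxOf (2*s+1+2^(n+2)) = 2^(n+1) + s := by
  have h2 : (2:ℕ)^(n+2) = 2*2^(n+1) := by ring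
  have h3 : (2:ℕ)^(n+3) = 4*2^(n+1) := by ring
  rw [v1, idxApp2 (by rw [mem_Aodd]; omega) (mem_Bodd.2 (by omega)),
    lenAodd, iBodd n s hs]

lemma i1EL (hs : s < 2^(n+1)) : (v1 n).idxOf (2*s+2) = 2*2^(n+1) + s := by
  have h2 : (2:ℕ)^(n+2) = 2*2^(n+1) := by ring
  rw [v1, idxApp3 (by rw [mem_Aodd]; omega) (by rw [mem_Bodd]; omega)
    (mem_Aeven.2 (by omega)), lenAodd, lenBodd, iAeven n s hs]
  omega

lemma i1EU (hs : s < 2^(n+1)) : (v1 n).idxOf (2*s+2+2^(n+2)) = 3*2^(n+1) + s := by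
  have h2 : (2:ℕ)^(n+2) = 2*2^(n+1) := by ring
  have h3 : (2:ℕ)^(n+3) = 4*2^(n+1) := by ring
  rw [v1, idxApp4 (by rw [mem_Aodd]; omega) (by rw [mem_Bodd]; omega)
    (by rw [mem_Aeven]; omega), lenAodd, lenBodd, lenAeven, iBeven n s hs]
  omega

lemma i2EL (hs : s < 2^(n+1)) : (v2 n).idxOf (2*s+2) = 2^(n+1) - 1 - s := by
  have h2 : (2:ℕ)^(n+2) = 2*2^(n+1) := by ring
  rw [v2, idxApp1 (by rw [List.mem_reverse]; exact mem_Aeven.2 (by omega))]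
  exact iAevenR n s hs

lemma i2EU (hs : s < 2^(n+1)) : (v2 n).idxOf (2*s+2+2^(n+2)) = 2*2^(n+1) - 1 - s := by
  have h2 : (2:ℕ)^(n+2) = 2*2^(n+1) := by ring
  have h3 : (2:ℕ)^(n+3) = 4*2^(n+1) := by ring
  rw [v2, idxApp2 (by rw [List.mem_reverse, mem_Aeven]; omega)
    (by rw [List.mem_reverse]; exact mem_Beven.2 (by omega)),
    List.length_reverse, lenAeven, iBevenR n s hs]
  omega

lemma i2OL (hs : s < 2^(n+1)) : (v2 n).idxOf (2*s+1) = 3*2^(n+1) - 1 - s := by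
  have h2 : (2:ℕ)^(n+2) = 2*2^(n+1) := by ring
  rw [v2, idxApp3 (by rw [List.mem_reverse, mem_Aeven]; omega)
    (by rw [List.mem_reverse, mem_Beven]; omega)
    (by rw [List.mem_reverse]; exact mem_Aodd.2 (by omega)),
    List.length_reverse, List.length_reverse, lenAeven, lenBeven, iAoddR n s hs]
  omega

lemma i2OU (hs : s < 2^(n+1)) : (v2 n).idxOf (2*s+1+2^(n+2)) = 4*2^(n+1) - 1 - s := by
  have h2 : (2:ℕ)^(n+2) = 2*2^(n+1) := by ring
  have h3 : (2:ℕ)^(n+3) = 4*2^(n+1) := by ring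
  rw [v2, idxApp4 (by rw [List.mem_reverse, mem_Aeven]; omega)
    (by rw [List.mem_reverse, mem_Beven]; omega)
    (by rw [List.mem_reverse, mem_Aodd]; omega),
    List.length_reverse, List.length_reverse, List.length_reverse,
    lenAeven, lenBeven, lenAodd, iBoddR n s hs]
  omega

lemma i3OU (hs : s < 2^(n+1)) : (v3 n).idxOf (2*s+1+2^(n+2)) = s := by
  have h2 : (2:ℕ)^(n+2) = 2*2^(n+1) := by ring
  have h3 : (2:ℕ)^(n+3) = 4*2^(n+1) := by ring
  rw [v3, idxApp1 (mem_Bodd.2 (by omega))]; exact iBodd n s hs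

lemma i3EL (hs : s < 2^(n+1)) : (v3 n).idxOf (2*s+2) = 2^(n+1) + s := by
  have h2 : (2:ℕ)^(n+2) = 2*2^(n+1) := by ring
  rw [v3, idxApp2 (by rw [mem_Bodd]; omega) (mem_Aeven.2 (by omega)),
    lenBodd, iAeven n s hs]

lemma i3EU (hs : s < 2^(n+1)) : (v3 n).idxOf (2*s+2+2^(n+2)) = 2*2^(n+1) + s := by
  have h2 : (2:ℕ)^(n+2) = 2*2^(n+1) := by ring
  have h3 : (2:ℕ)^(n+3) = 4*2^(n+1) := by ring
  rw [v3, idxApp3 (by rw [mem_Bodd]; omega) (by rw [mem_Aeven]; omega)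
    (mem_Beven.2 (by omega)), lenBodd, lenAeven, iBeven n s hs]
  omega

lemma i3OL (hs : s < 2^(n+1)) : (v3 n).idxOf (2*s+1) = 3*2^(n+1) + s := by
  have h2 : (2:ℕ)^(n+2) = 2*2^(n+1) := by ring
  rw [v3, idxApp4 (by rw [mem_Bodd]; omega) (by rw [mem_Aeven]; omega)
    (by rw [mem_Beven]; omega), lenBodd, lenAeven, lenBeven, iAodd n s hs]
  omega

lemma i4EU (hs : s < 2^(n+1)) : (v4 n).idxOf (2*s+2+2^(n+2)) = 2^(n+1) - 1 - s := by
  have h2 : (2:ℕ)^(n+2) = 2*2^(n+1) := by ring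
  have h3 : (2:ℕ)^(n+3) = 4*2^(n+1) := by ring
  rw [v4, idxApp1 (by rw [List.mem_reverse]; exact mem_Beven.2 (by omega))]
  exact iBevenR n s hs

lemma i4OL (hs : s < 2^(n+1)) : (v4 n).idxOf (2*s+1) = 2*2^(n+1) - 1 - s := by
  have h2 : (2:ℕ)^(n+2) = 2*2^(n+1) := by ring
  rw [v4, idxApp2 (by rw [List.mem_reverse, mem_Beven]; omega)
    (by rw [List.mem_reverse]; exact mem_Aodd.2 (by omega)),
    List.length_reverse, lenBeven, iAoddR n s hs]
  omega

lemma i4OU (hs : s < 2^(n+1)) : (v4 n).idxOf (2*s+1+2^(n+2)) = 3*2^(n+1) - 1 - s := by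
  have h2 : (2:ℕ)^(n+2) = 2*2^(n+1) := by ring
  have h3 : (2:ℕ)^(n+3) = 4*2^(n+1) := by ring
  rw [v4, idxApp3 (by rw [List.mem_reverse, mem_Beven]; omega)
    (by rw [List.mem_reverse, mem_Aodd]; omega)
    (by rw [List.mem_reverse]; exact mem_Bodd.2 (by omega)),
    List.length_reverse, List.length_reverse, lenBeven, lenAodd, iBoddR n s hs]
  omega

lemma i4EL (hs : s < 2^(n+1)) : (v4 n).idxOf (2*s+2) = 4*2^(n+1) - 1 - s := by
  have h2 : (2:ℕ)^(n+2) = 2*2^(n+1) := by ring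
  have h3 : (2:ℕ)^(n+3) = 4*2^(n+1) := by ring
  rw [v4, idxApp4 (by rw [List.mem_reverse, mem_Beven]; omega)
    (by rw [List.mem_reverse, mem_Aodd]; omega)
    (by rw [List.mem_reverse, mem_Bodd]; omega),
    List.length_reverse, List.length_reverse, List.length_reverse,
    lenBeven, lenAodd, lenBodd, iAevenR n s hs]
  omega

end

lemma prefCount_quad (a b c d : List ℕ) (i j : ℕ) :
    prefCount [a, b, c, d] i j =
      (if a.idxOf i < a.idxOf j then 1 else 0) +
      (if b.idxOf i < b.idxOf j then 1 else 0) +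
      (if c.idxOf i < c.idxOf j then 1 else 0) +
      (if d.idxOf i < d.idxOf j then 1 else 0) := by
  simp only [prefCount, List.filter_cons, List.filter_nil, decide_eq_true_eq]
  split_ifs <;> simp_all

/-! Count lemmas for all shape pairs -/

section
variable (n s t : ℕ)

lemma cOLOL (hs : s < 2^(n+1)) (ht : t < 2^(n+1)) (hst : s ≠ t) :
    prefCount [v1 n, v2 n, v3 n, v4 n] (2*s+1) (2*t+1) = 2 := by
  rw [prefCount_quad, i1OL n s hs, i1OL n t ht, i2OL n s hs, i2OL n t ht,
    i3OL n s hs, i3OL n t ht, i4OL n s hs, i4OL n t ht]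
  split_ifs <;> omega

lemma cELEL (hs : s < 2^(n+1)) (ht : t < 2^(n+1)) (hst : s ≠ t) :
    prefCount [v1 n, v2 n, v3 n, v4 n] (2*s+2) (2*t+2) = 2 := by
  rw [prefCount_quad, i1EL n s hs, i1EL n t ht, i2EL n s hs, i2EL n t ht,
    i3EL n s hs, i3EL n t ht, i4EL n s hs, i4EL n t ht]
  split_ifs <;> omega

lemma cOUOU (hs : s < 2^(n+1)) (ht : t < 2^(n+1)) (hst : s ≠ t) :
    prefCount [v1 n, v2 n, v3 n, v4 n] (2*s+1+2^(n+2)) (2*t+1+2^(n+2)) = 2 := by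
  rw [prefCount_quad, i1OU n s hs, i1OU n t ht, i2OU n s hs, i2OU n t ht,
    i3OU n s hs, i3OU n t ht, i4OU n s hs, i4OU n t ht]
  split_ifs <;> omega

lemma cEUEU (hs : s < 2^(n+1)) (ht : t < 2^(n+1)) (hst : s ≠ t) :
    prefCount [v1 n, v2 n, v3 n, v4 n] (2*s+2+2^(n+2)) (2*t+2+2^(n+2)) = 2 := by
  rw [prefCount_quad, i1EU n s hs, i1EU n t ht, i2EU n s hs, i2EU n t ht,
    i3EU n s hs, i3EU n t ht, i4EU n s hs, i4EU n t ht]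
  split_ifs <;> omega

lemma cOLEL (hs : s < 2^(n+1)) (ht : t < 2^(n+1)) : prefCount [v1 n, v2 n, v3 n, v4 n] (2*s+1) (2*t+2) = 2 := by
  rw [prefCount_quad, i1OL n s hs, i1EL n t ht, i2OL n s hs, i2EL n t ht,
    i3OL n s hs, i3EL n t ht, i4OL n s hs, i4EL n t ht]
  split_ifs <;> omega

lemma cELOL (hs : s < 2^(n+1)) (ht : t < 2^(n+1)) : prefCount [v1 n, v2 n, v3 n, v4 n] (2*s+2) (2*t+1) = 2 := by
  rw [prefCount_quad, i1EL n s hs, i1OL n t ht, i2EL n s hs, i2OL n t ht,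
    i3EL n s hs, i3OL n t ht, i4EL n s hs, i4OL n t ht]
  split_ifs <;> omega

lemma cOUEU (hs : s < 2^(n+1)) (ht : t < 2^(n+1)) : prefCount [v1 n, v2 n, v3 n, v4 n] (2*s+1+2^(n+2)) (2*t+2+2^(n+2)) = 2 := by
  rw [prefCount_quad, i1OU n s hs, i1EU n t ht, i2OU n s hs, i2EU n t ht,
    i3OU n s hs, i3EU n t ht, i4OU n s hs, i4EU n t ht]
  split_ifs <;> omega

lemma cEUOU (hs : s < 2^(n+1)) (ht : t < 2^(n+1)) : prefCount [v1 n, v2 n, v3 n, v4 n] (2*s+2+2^(n+2)) (2*t+1+2^(n+2)) = 2 := by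
  rw [prefCount_quad, i1EU n s hs, i1OU n t ht, i2EU n s hs, i2OU n t ht,
    i3EU n s hs, i3OU n t ht, i4EU n s hs, i4OU n t ht]
  split_ifs <;> omega

lemma cOLOU (hs : s < 2^(n+1)) (ht : t < 2^(n+1)) : prefCount [v1 n, v2 n, v3 n, v4 n] (2*s+1) (2*t+1+2^(n+2)) = 3 := by
  rw [prefCount_quad, i1OL n s hs, i1OU n t ht, i2OL n s hs, i2OU n t ht,
    i3OL n s hs, i3OU n t ht, i4OL n s hs, i4OU n t ht]
  split_ifs <;> omega

lemma cOUOL (hs : s < 2^(n+1)) (ht : t < 2^(n+1)) : prefCount [v1 n, v2 n, v3 n, v4 n] (2*s+1+2^(n+2)) (2*t+1) = 1 := by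
  rw [prefCount_quad, i1OU n s hs, i1OL n t ht, i2OU n s hs, i2OL n t ht,
    i3OU n s hs, i3OL n t ht, i4OU n s hs, i4OL n t ht]
  split_ifs <;> omega

lemma cELEU (hs : s < 2^(n+1)) (ht : t < 2^(n+1)) : prefCount [v1 n, v2 n, v3 n, v4 n] (2*s+2) (2*t+2+2^(n+2)) = 3 := by
  rw [prefCount_quad, i1EL n s hs, i1EU n t ht, i2EL n s hs, i2EU n t ht,
    i3EL n s hs, i3EU n t ht, i4EL n s hs, i4EU n t ht]
  split_ifs <;> omega

lemma cEUEL (hs : s < 2^(n+1)) (ht : t < 2^(n+1)) : prefCount [v1 n, v2 n, v3 n, v4 n] (2*s+2+2^(n+2)) (2*t+2) = 1 := by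
  rw [prefCount_quad, i1EU n s hs, i1EL n t ht, i2EU n s hs, i2EL n t ht,
    i3EU n s hs, i3EL n t ht, i4EU n s hs, i4EL n t ht]
  split_ifs <;> omega

lemma cOLEU (hs : s < 2^(n+1)) (ht : t < 2^(n+1)) : prefCount [v1 n, v2 n, v3 n, v4 n] (2*s+1) (2*t+2+2^(n+2)) = 1 := by
  rw [prefCount_quad, i1OL n s hs, i1EU n t ht, i2OL n s hs, i2EU n t ht,
    i3OL n s hs, i3EU n t ht, i4OL n s hs, i4EU n t ht]
  split_ifs <;> omega

lemma cEUOL (hs : s < 2^(n+1)) (ht : t < 2^(n+1)) : prefCount [v1 n, v2 n, v3 n, v4 n] (2*s+2+2^(n+2)) (2*t+1) = 3 := by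
  rw [prefCount_quad, i1EU n s hs, i1OL n t ht, i2EU n s hs, i2OL n t ht,
    i3EU n s hs, i3OL n t ht, i4EU n s hs, i4OL n t ht]
  split_ifs <;> omega

lemma cELOU (hs : s < 2^(n+1)) (ht : t < 2^(n+1)) : prefCount [v1 n, v2 n, v3 n, v4 n] (2*s+2) (2*t+1+2^(n+2)) = 1 := by
  rw [prefCount_quad, i1EL n s hs, i1OU n t ht, i2EL n s hs, i2OU n t ht,
    i3EL n s hs, i3OU n t ht, i4EL n s hs, i4OU n t ht]
  split_ifs <;> omega

lemma cOUEL (hs : s < 2^(n+1)) (ht : t < 2^(n+1)) : prefCount [v1 n, v2 n, v3 n, v4 n] (2*s+1+2^(n+2)) (2*t+2) = 3 := by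
  rw [prefCount_quad, i1OU n s hs, i1EL n t ht, i2OU n s hs, i2EL n t ht,
    i3OU n s hs, i3EL n t ht, i4OU n s hs, i4EL n t ht]
  split_ifs <;> omega

end

/-- The four-voter profile `(v₁, v₂, v₃, v₄)` on `{1,…,2^(n+3)}` (for `n ≥ 1`):
(a) two distinct candidates in the same half are ranked `i` before `j` by exactly two
of the four rows (a tie); (b) for `i` in the lower half and `j` in the upper half, at
least three rows rank `i` before `j` when `i+j` is even, and at least three rows rank
`j` before `i` when `i+j` is odd; hence the profile generates exactly the cross arrows
of `η_n` and no arrows within each half. -/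
theorem stmt8 (n : ℕ) (hn : 1 ≤ n) :
    (∀ i ∈ List.range' 1 (2^(n+2)), ∀ j ∈ List.range' 1 (2^(n+2)), i ≠ j →
      prefCount [v1 n, v2 n, v3 n, v4 n] i j = 2) ∧
    (∀ i ∈ List.range' (2^(n+2)+1) (2^(n+2)), ∀ j ∈ List.range' (2^(n+2)+1) (2^(n+2)),
      i ≠ j → prefCount [v1 n, v2 n, v3 n, v4 n] i j = 2) ∧
    (∀ i ∈ List.range' 1 (2^(n+2)), ∀ j ∈ List.range' (2^(n+2)+1) (2^(n+2)),
      ((i + j) % 2 = 0 → 3 ≤ prefCount [v1 n, v2 n, v3 n, v4 n] i j) ∧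
      ((i + j) % 2 = 1 → 3 ≤ prefCount [v1 n, v2 n, v3 n, v4 n] j i)) ∧
    (∀ i ∈ List.range' 1 (2^(n+3)), ∀ j ∈ List.range' 1 (2^(n+3)), i ≠ j →
      (prefCount [v1 n, v2 n, v3 n, v4 n] j i < prefCount [v1 n, v2 n, v3 n, v4 n] i j ↔
        ((i ≤ 2^(n+2) ∧ 2^(n+2) < j ∧ (i + j) % 2 = 0) ∨
         (j ≤ 2^(n+2) ∧ 2^(n+2) < i ∧ (i + j) % 2 = 1)))) := by
  have h2 : (2:ℕ)^(n+2) = 2*2^(n+1) := by ring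
  have h3 : (2:ℕ)^(n+3) = 4*2^(n+1) := by ring
  have low : ∀ i ∈ List.range' 1 (2^(n+2)),
      ∃ s, s < 2^(n+1) ∧ (i = 2*s+1 ∨ i = 2*s+2) := by
    intro i hi
    rw [List.mem_range'] at hi
    obtain ⟨k, hk, rfl⟩ := hi
    exact ⟨k/2, by omega, by omega⟩
  have high : ∀ i ∈ List.range' (2^(n+2)+1) (2^(n+2)),
      ∃ s, s < 2^(n+1) ∧ (i = 2*s+1+2^(n+2) ∨ i = 2*s+2+2^(n+2)) := by
    intro i hi
    rw [List.mem_range'] at hi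
    obtain ⟨k, hk, rfl⟩ := hi
    exact ⟨k/2, by omega, by omega⟩
  have full : ∀ i ∈ List.range' 1 (2^(n+3)),
      ∃ s, s < 2^(n+1) ∧
        (i = 2*s+1 ∨ i = 2*s+2 ∨ i = 2*s+1+2^(n+2) ∨ i = 2*s+2+2^(n+2)) := by
    intro i hi
    rw [List.mem_range'] at hi
    obtain ⟨k, hk, rfl⟩ := hi
    rcases lt_or_ge k (2^(n+2)) with h | h
    · exact ⟨k/2, by omega, by omega⟩
    · exact ⟨(k - 2^(n+2))/2, by omega, by omega⟩
  refine ⟨?_, ?_, ?_, ?_⟩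
  · intro i hi j hj hij
    obtain ⟨s, hs, rfl | rfl⟩ := low i hi <;> obtain ⟨t, ht, rfl | rfl⟩ := low j hj
    · exact cOLOL n s t hs ht (by omega)
    · exact cOLEL n s t hs ht
    · exact cELOL n s t hs ht
    · exact cELEL n s t hs ht (by omega)
  · intro i hi j hj hij
    obtain ⟨s, hs, rfl | rfl⟩ := high i hi <;> obtain ⟨t, ht, rfl | rfl⟩ := high j hj
    · exact cOUOU n s t hs ht (by omega)
    · exact cOUEU n s t hs ht
    · exact cEUOU n s t hs ht
    · exact cEUEU n s t hs ht (by omega)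
  · intro i hi j hj
    obtain ⟨s, hs, rfl | rfl⟩ := low i hi <;> obtain ⟨t, ht, rfl | rfl⟩ := high j hj
    · exact ⟨fun _ => by rw [cOLOU n s t hs ht], fun hp => by omega⟩
    · exact ⟨fun hp => by omega, fun _ => by rw [cEUOL n t s ht hs]⟩
    · exact ⟨fun hp => by omega, fun _ => by rw [cOUEL n t s ht hs]⟩
    · exact ⟨fun _ => by rw [cELEU n s t hs ht], fun hp => by omega⟩
  · intro i hi j hj hij
    obtain ⟨s, hs, rfl | rfl | rfl | rfl⟩ := full i hi <;>
      obtain ⟨t, ht, rfl | rfl | rfl | rfl⟩ := full j hj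
    · rw [cOLOL n t s ht hs (by omega), cOLOL n s t hs ht (by omega)]; omega
    · rw [cELOL n t s ht hs, cOLEL n s t hs ht]; omega
    · rw [cOUOL n t s ht hs, cOLOU n s t hs ht]; omega
    · rw [cEUOL n t s ht hs, cOLEU n s t hs ht]; omega
    · rw [cOLEL n t s ht hs, cELOL n s t hs ht]; omega
    · rw [cELEL n t s ht hs (by omega), cELEL n s t hs ht (by omega)]; omega
    · rw [cOUEL n t s ht hs, cELOU n s t hs ht]; omega
    · rw [cEUEL n t s ht hs, cELEU n s t hs ht]; omega
    · rw [cOLOU n t s ht hs, cOUOL n s t hs ht]; omega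
    · rw [cELOU n t s ht hs, cOUEL n s t hs ht]; omega
    · rw [cOUOU n t s ht hs (by omega), cOUOU n s t hs ht (by omega)]; omega
    · rw [cEUOU n t s ht hs, cOUEU n s t hs ht]; omega
    · rw [cOLEU n t s ht hs, cEUOL n s t hs ht]; omega
    · rw [cELEU n t s ht hs, cEUEL n s t hs ht]; omega
    · rw [cOUEU n t s ht hs, cEUOU n s t hs ht]; omega
    · rw [cEUEU n t s ht hs (by omega), cEUEU n s t hs ht (by omega)]; omega
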